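/- If two solutions (x_1,x_2) and (y_1,y_2) in (K*)^2 of a_1x_1 + a_2x_2 = 1 both satisfy a_1x_1/(a_2x_2) ∈ k* and a_1y_1/(a_2y_2) ∈ k*, then they lie in the same (k*)^2-coset, i.e., (x_1/y_1, x_2/y_2) ∈ (k*)^2. Conversely, if (x_1,x_2) and (y_1,y_2) are distinct solutions lying in the same (k*)^2-coset, then a_1x_1/(a_2x_2) ∈ k*. -/

import Mathlib

/-- Solutions of a₁x₁+a₂x₂ = 1 with a₁x₁/(a₂x₂) ∈ k* lie in one (k*)²-coset; conversely
distinct solutions in a common (k*)²-coset have a₁x₁/(a₂x₂) ∈ k*. -/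
theorem two_variable_cosets {K : Type*} [Field K] [CharZero K] (k : Subfield K)
    (a₁ a₂ : K) (ha₁ : a₁ ≠ 0) (ha₂ : a₂ ≠ 0)
    (x₁ x₂ y₁ y₂ : K) (hx₁ : x₁ ≠ 0) (hx₂ : x₂ ≠ 0) (hy₁ : y₁ ≠ 0) (hy₂ : y₂ ≠ 0)
    (hx : a₁ * x₁ + a₂ * x₂ = 1) (hy : a₁ * y₁ + a₂ * y₂ = 1) :
    (((a₁ * x₁) / (a₂ * x₂) ∈ k ∧ (a₁ * y₁) / (a₂ * y₂) ∈ k) →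
      (x₁ / y₁ ∈ k ∧ x₂ / y₂ ∈ k)) ∧
    (((x₁, x₂) ≠ (y₁, y₂) ∧ x₁ / y₁ ∈ k ∧ x₂ / y₂ ∈ k) →
      (a₁ * x₁) / (a₂ * x₂) ∈ k) := by
  have ha₂x₂ : a₂ * x₂ ≠ 0 := mul_ne_zero ha₂ hx₂
  have ha₂y₂ : a₂ * y₂ ≠ 0 := mul_ne_zero ha₂ hy₂
  have ha₁x₁ : a₁ * x₁ ≠ 0 := mul_ne_zero ha₁ hx₁
  have ha₁y₁ : a₁ * y₁ ≠ 0 := mul_ne_zero ha₁ hy₁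
  constructor
  · rintro ⟨hl, hm⟩
    have hmne : (a₁ * y₁) / (a₂ * y₂) ≠ 0 := div_ne_zero ha₁y₁ ha₂y₂
    have h1l : (1 : K) + (a₁ * x₁) / (a₂ * x₂) = 1 / (a₂ * x₂) := by
      field_simp; linear_combination hx
    have h1m : (1 : K) + (a₁ * y₁) / (a₂ * y₂) = 1 / (a₂ * y₂) := by
      field_simp; linear_combination hy
    have h1lne : (1 : K) + (a₁ * x₁) / (a₂ * x₂) ≠ 0 := by
      rw [h1l]; exact one_div_ne_zero ha₂x₂
    have h1mne : (1 : K) + (a₁ * y₁) / (a₂ * y₂) ≠ 0 := by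
      rw [h1m]; exact one_div_ne_zero ha₂y₂
    have e2 : x₂ / y₂ = (1 + (a₁ * y₁) / (a₂ * y₂)) / (1 + (a₁ * x₁) / (a₂ * x₂)) := by
      rw [h1l, h1m]
      field_simp
    have e1 : x₁ / y₁ = ((a₁ * x₁) / (a₂ * x₂) * (1 + (a₁ * y₁) / (a₂ * y₂))) /
        ((a₁ * y₁) / (a₂ * y₂) * (1 + (a₁ * x₁) / (a₂ * x₂))) := by
      rw [h1l, h1m]
      field_simp
    refine ⟨?_, ?_⟩
    · rw [e1]
      exact k.div_mem (k.mul_mem hl (k.add_mem k.one_mem hm))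
        (k.mul_mem hm (k.add_mem k.one_mem hl))
    · rw [e2]
      exact k.div_mem (k.add_mem k.one_mem hm) (k.add_mem k.one_mem hl)
  · rintro ⟨hne, hc, hd⟩
    have hcx : x₁ = (x₁ / y₁) * y₁ := by field_simp
    have hdx : x₂ = (x₂ / y₂) * y₂ := by field_simp
    have key : a₁ * y₁ * (x₁ / y₁ - 1) = a₂ * y₂ * (1 - x₂ / y₂) := by
      field_simp
      linear_combination hx - hy
    by_cases hc1 : x₁ / y₁ = 1
    · exfalso
      have hx1 : x₁ = y₁ := by field_simp at hc1; exact hc1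
      have : a₂ * x₂ = a₂ * y₂ := by linear_combination hx - hy - a₁ * hx1
      have hx2 : x₂ = y₂ := mul_left_cancel₀ ha₂ this
      exact hne (by rw [hx1, hx2])
    · have hc1' : x₁ / y₁ - 1 ≠ 0 := sub_ne_zero.mpr hc1
      have hdne : x₂ / y₂ ≠ 0 := div_ne_zero hx₂ hy₂
      have hly : (a₁ * y₁) / (a₂ * y₂) = (1 - x₂ / y₂) / (x₁ / y₁ - 1) := by
        rw [eq_div_iff hc1', div_mul_eq_mul_div, div_eq_iff ha₂y₂]
        linear_combination key
      have hlym : (a₁ * y₁) / (a₂ * y₂) ∈ k := by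
        rw [hly]
        exact k.div_mem (k.sub_mem k.one_mem hd) (k.sub_mem hc k.one_mem)
      have final : (a₁ * x₁) / (a₂ * x₂) = (x₁ / y₁) / (x₂ / y₂) * ((a₁ * y₁) / (a₂ * y₂)) := by
        field_simp
      rw [final]
      exact k.mul_mem (k.div_mem hc hd) hlym
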